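/- For the linear system Ẋ = AX in ℝ³, the flow curvature manifold {X : det(AX, A²X, A³X) = 0} is invariant under the flow, i.e., if det(AX₀, A²X₀, A³X₀) = 0 then det(Ae^{tA}X₀, A²e^{tA}X₀, A³e^{tA}X₀) = 0 for all t, in the case where A has a real eigenbasis. -/

import Mathlib

open Matrix

lemma aux_col_mul (M : Matrix (Fin 3) (Fin 3) ℝ) (v : Fin 3 → (Fin 3 → ℝ)) :
    (Matrix.of ![M.mulVec (v 0), M.mulVec (v 1), M.mulVec (v 2)])ᵀ
      = M * (Matrix.of ![v 0, v 1, v 2])ᵀ := by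
  ext i j
  fin_cases j <;>
    simp [Matrix.mul_apply, Matrix.mulVec, dotProduct, Matrix.transpose_apply,
      Fin.sum_univ_three, Matrix.vecHead, Matrix.vecTail]

/-- For the linear system `Ẋ = AX` in `ℝ³` with `A` having a real eigenbasis, the flow
curvature manifold `{X : det(AX, A²X, A³X) = 0}` is invariant under the flow
`X₀ ↦ e^{tA} X₀`. -/
theorem stmt_17 (A : Matrix (Fin 3) (Fin 3) ℝ)
    (hbasis : ∃ b : Module.Basis (Fin 3) ℝ (Fin 3 → ℝ), ∀ i, ∃ μ : ℝ, A.mulVec (b i) = μ • b i)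
    (X₀ : Fin 3 → ℝ)
    (h0 : Matrix.det (Matrix.of
        ![A.mulVec X₀, A.mulVec (A.mulVec X₀), A.mulVec (A.mulVec (A.mulVec X₀))])ᵀ = 0) :
    ∀ t : ℝ,
      Matrix.det (Matrix.of
          ![A.mulVec ((NormedSpace.exp (t • A)).mulVec X₀),
            A.mulVec (A.mulVec ((NormedSpace.exp (t • A)).mulVec X₀)),
            A.mulVec (A.mulVec (A.mulVec ((NormedSpace.exp (t • A)).mulVec X₀)))])ᵀ = 0 := by
  intro t
  set M := NormedSpace.exp (t • A) with hM
  have hcomm : A * M = M * A := by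
    have h : Commute (t • A) A := (Commute.refl A).smul_left t
    simpa [hM] using h.exp_left.symm.eq
  have key : ∀ x : Fin 3 → ℝ, A.mulVec (M.mulVec x) = M.mulVec (A.mulVec x) := by
    intro x
    rw [Matrix.mulVec_mulVec, Matrix.mulVec_mulVec, hcomm]
  simp only [key]
  have := aux_col_mul M ![A.mulVec X₀, A.mulVec (A.mulVec X₀),
    A.mulVec (A.mulVec (A.mulVec X₀))]
  simp only [Matrix.cons_val_zero, Matrix.cons_val_one, Matrix.head_cons,
    Matrix.cons_val_two, Matrix.tail_cons] at this
  rw [this, Matrix.det_mul, h0, mul_zero]
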